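/- Let G be a graph, let Ω be a potential maximal clique of G, and let D be a connected component of G−Ω. Then N(D) is a minimal separator of G. -/

import Mathlib

open SimpleGraph Set

variable {V : Type*}

/-- Open neighborhood of a set: vertices outside `A` with a neighbor in `A`. -/
def nbhdSet (G : SimpleGraph V) (A : Set V) : Set V :=
  {v | v ∉ A ∧ ∃ u ∈ A, G.Adj u v}

/-- Union of closed neighborhoods of vertices of `X`. -/
def closedNbhd (G : SimpleGraph V) (X : Set V) : Set V :=
  X ∪ {v | ∃ u ∈ X, G.Adj u v}

/-- `A` is a connected component of `G - S`. -/
def IsCompOutside (G : SimpleGraph V) (S A : Set V) : Prop :=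
  A.Nonempty ∧ Disjoint A S ∧ (G.induce A).Connected ∧
    ∀ u ∈ A, ∀ v, v ∉ A → v ∉ S → ¬ G.Adj u v

/-- `A` is a full component of `G - S`, i.e. `N(A) = S`. -/
def IsFullComp (G : SimpleGraph V) (S A : Set V) : Prop :=
  IsCompOutside G S A ∧ nbhdSet G A = S

/-- `S` is a minimal separator: it has at least two full components. -/
def IsMinSep (G : SimpleGraph V) (S : Set V) : Prop :=
  ∃ A B : Set V, A ≠ B ∧ IsFullComp G S A ∧ IsFullComp G S B

/-- `f` is an induced copy of the path on `k` vertices in `G`. -/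
def IsInducedPathMap (G : SimpleGraph V) {k : ℕ} (f : Fin k ↪ V) : Prop :=
  ∀ i j : Fin k, G.Adj (f i) (f j) ↔ ((i : ℕ) + 1 = (j : ℕ) ∨ (j : ℕ) + 1 = (i : ℕ))

/-- `G` is `P_t`-free: no induced path on `t` vertices. -/
def PFree (t : ℕ) (G : SimpleGraph V) : Prop :=
  ¬ ∃ f : Fin t ↪ V, IsInducedPathMap G f

/-- `Ω` is a potential maximal clique. -/
def IsPMC (G : SimpleGraph V) (Ω : Set V) : Prop :=
  (∀ D : Set V, IsCompOutside G Ω D → nbhdSet G D ≠ Ω) ∧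
  (∀ u ∈ Ω, ∀ v ∈ Ω, u ≠ v → ¬ G.Adj u v →
    ∃ D : Set V, IsCompOutside G Ω D ∧ u ∈ nbhdSet G D ∧ v ∈ nbhdSet G D)

/-- The graph `G` with all edges meeting `S` removed. -/
def delG (G : SimpleGraph V) (S : Set V) : SimpleGraph V where
  Adj u v := G.Adj u v ∧ u ∉ S ∧ v ∉ S
  symm := ⟨by rintro u v ⟨h, hu, hv⟩; exact ⟨h.symm, hv, hu⟩⟩
  loopless := ⟨by rintro v ⟨h, _⟩; exact G.irrefl h⟩

lemma delG_walk_not_mem {G : SimpleGraph V} {S : Set V} :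
    ∀ {u v : V}, (delG G S).Walk u v → u ∉ S → v ∉ S := by
  intro u v w
  induction w with
  | nil => exact id
  | cons h p ih => exact fun _ => ih h.2.2

lemma induce_walk_reach {G : SimpleGraph V} {S A : Set V} (hA : Disjoint A S) :
    ∀ {a b : A}, (G.induce A).Walk a b → (delG G S).Reachable a.1 b.1 := by
  intro a b w
  induction w with
  | nil => exact Reachable.refl _
  | @cons a y b h p ih =>
    refine (SimpleGraph.Adj.reachable ?_).trans ih
    exact ⟨h, fun hs => hA.ne_of_mem a.2 hs rfl, fun hs => hA.ne_of_mem y.2 hs rfl⟩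

lemma lift_walk_reach {G : SimpleGraph V} {S : Set V} {x : V} :
    ∀ {u v : V} (w : (delG G S).Walk u v) (hu : (delG G S).Reachable x u),
      (G.induce {v | (delG G S).Reachable x v}).Reachable ⟨u, hu⟩
        ⟨v, hu.trans w.reachable⟩ := by
  intro u v w
  induction w with
  | nil => exact fun hu => Reachable.refl _
  | @cons u y v h p ih =>
    intro hu
    have hy : (delG G S).Reachable x y := hu.trans h.reachable
    have step : (G.induce {v | (delG G S).Reachable x v}).Adj ⟨u, hu⟩ ⟨y, hy⟩ := h.1
    exact step.reachable.trans (ih hy)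

/-- For a PMC `Ω` and a component `D` of `G - Ω`, the set `N(D)` is a minimal separator. -/
theorem stmt_11 [Fintype V] (G : SimpleGraph V) (Ω : Set V) (hΩ : IsPMC G Ω)
    (D : Set V) (hD : IsCompOutside G Ω D) :
    IsMinSep G (nbhdSet G D) := by
  obtain ⟨hDne, hDdisj, hDconn, hDbd⟩ := hD
  set S := nbhdSet G D with hS
  -- S ⊆ Ω
  have hSΩ : S ⊆ Ω := by
    rintro v ⟨hvD, u, huD, hadj⟩
    by_contra hvΩ
    exact hDbd u huD v hvD hvΩ hadj
  have hSneΩ : S ≠ Ω := hΩ.1 D ⟨hDne, hDdisj, hDconn, hDbd⟩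
  obtain ⟨x, hxΩ, hxS⟩ : ∃ x, x ∈ Ω ∧ x ∉ S := by
    obtain ⟨x, hx1, hx2⟩ := Set.exists_of_ssubset (hSΩ.ssubset_of_ne hSneΩ)
    exact ⟨x, hx1, hx2⟩
  have hDS : Disjoint D S := fun T hTD hTS v hv => (hTS hv).1 (hTD hv)
  -- D is a full component of S
  have hDfull : IsFullComp G S D := by
    refine ⟨⟨hDne, hDS, hDconn, ?_⟩, rfl⟩
    intro u hu v hvD hvS hadj
    exact hvS ⟨hvD, u, hu, hadj⟩
  -- the component of G - S containing x
  set C : Set V := {v | (delG G S).Reachable x v} with hC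
  have hxC : x ∈ C := Reachable.refl x
  have hCS : Disjoint C S := by
    rw [Set.disjoint_left]
    intro v hv hvS
    obtain ⟨w⟩ := hv
    exact delG_walk_not_mem w hxS hvS
  have hCclosed : ∀ u ∈ C, ∀ v, v ∉ S → G.Adj u v → v ∈ C := by
    intro u hu v hvS hadj
    exact Reachable.trans hu
      (SimpleGraph.Adj.reachable ⟨hadj, fun h => hCS.ne_of_mem hu h rfl, hvS⟩)
  have hCconn : (G.induce C).Connected := by
    have : Nonempty ↥C := ⟨⟨x, hxC⟩⟩
    constructor
    intro a b
    obtain ⟨u, hu⟩ := a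
    obtain ⟨v, hv⟩ := b
    obtain ⟨w⟩ := hu.symm.trans hv
    exact lift_walk_reach w hu
  have hCcomp : IsCompOutside G S C := by
    refine ⟨⟨x, hxC⟩, hCS, hCconn, ?_⟩
    intro u hu v hvC hvS hadj
    exact hvC (hCclosed u hu v hvS hadj)
  -- N(C) = S
  have hNC : nbhdSet G C = S := by
    apply Set.eq_of_subset_of_subset
    · rintro v ⟨hvC, u, huC, hadj⟩
      by_contra hvS
      exact hvC (hCclosed u huC v hvS hadj)
    · intro s hsS
      have hsΩ : s ∈ Ω := hSΩ hsS
      have hsC : s ∉ C := fun h => hCS.ne_of_mem h hsS rfl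
      refine ⟨hsC, ?_⟩
      by_cases hadj : G.Adj x s
      · exact ⟨x, hxC, hadj⟩
      · have hxs : x ≠ s := fun h => hxS (h ▸ hsS)
        obtain ⟨D', hD', hxN, hsN⟩ := hΩ.2 x hxΩ s hsΩ hxs hadj
        obtain ⟨hD'ne, hD'disj, hD'conn, hD'bd⟩ := hD'
        have hD'S : Disjoint D' S := hD'disj.mono_right hSΩ
        -- some vertex of D' is adjacent to x, hence D' ⊆ C
        obtain ⟨_, d, hdD', hdx⟩ := hxN
        have hdC : d ∈ C := hCclosed x hxC d
          (fun h => hD'S.ne_of_mem hdD' h rfl) hdx.symm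
        have hD'C : ∀ e ∈ D', e ∈ C := by
          intro e heD'
          obtain ⟨w⟩ := hD'conn.preconnected ⟨d, hdD'⟩ ⟨e, heD'⟩
          exact Reachable.trans hdC (induce_walk_reach hD'S w)
        obtain ⟨_, e, heD', hes⟩ := hsN
        exact ⟨e, hD'C e heD', hes⟩
  have hCD : C ≠ D := by
    intro h
    have : x ∈ D := h ▸ hxC
    exact hxS ⟨fun hxD => hDdisj.ne_of_mem this hxΩ rfl, False.elim (hDdisj.ne_of_mem this hxΩ rfl)⟩
  exact ⟨D, C, hCD.symm, hDfull, hCcomp, hNC⟩
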